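/- Under the setup of the sequential multivariate phase-type density f(y₁,…,yₙ) = α·exp(A₁y₁)·D₁ ⋯ exp(Aₙyₙ)·Dₙ·𝟏, the joint Laplace transform satisfies ∫₀^∞⋯∫₀^∞ e^{−θ₁y₁−⋯−θₙyₙ} f(y₁,…,yₙ) dy₁⋯dyₙ = α·(θ₁I−A₁)^{−1}D₁·(θ₂I−A₂)^{−1}D₂ ⋯ (θₙI−Aₙ)^{−1}Dₙ·𝟏 for all θ₁,…,θₙ ≥ 0. -/

import Mathlib

open Matrix MeasureTheory Filter

/-- Iterated left-multiplication of a row vector by a chain of (rectangular) step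
matrices `M 0, M 1, …`, yielding a row vector at every intermediate position. -/
noncomputable def chainRow {n : ℕ} (d : Fin (n + 1) → ℕ)
    (M : (k : Fin n) → Matrix (Fin (d k.castSucc)) (Fin (d k.succ)) ℝ)
    (v0 : Fin (d 0) → ℝ) : (k : Fin (n + 1)) → Fin (d k) → ℝ :=
  Fin.induction v0 (fun k ih => ih ᵥ* M k)

lemma chainRow_zero {n : ℕ} (d : Fin (n + 1) → ℕ) (M) (v : Fin (d 0) → ℝ) :
    chainRow d M v 0 = v := rfl

lemma chainRow_succ {n : ℕ} (d : Fin (n + 1) → ℕ) (M) (v : Fin (d 0) → ℝ) (k : Fin n) :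
    chainRow d M v k.succ = chainRow d M v k.castSucc ᵥ* M k := by
  simp [chainRow]

lemma chainRow_shift {m : ℕ} (d : Fin (m + 2) → ℕ)
    (M : (k : Fin (m + 1)) → Matrix (Fin (d k.castSucc)) (Fin (d k.succ)) ℝ)
    (v : Fin (d 0) → ℝ) (k : Fin (m + 1)) :
    chainRow d M v k.succ
      = chainRow (fun i => d i.succ) (fun i : Fin m => M i.succ) (v ᵥ* M 0) k := by
  induction k using Fin.induction with
  | zero => rw [chainRow_succ d M v 0]; rfl
  | succ k ih =>
      rw [chainRow_succ d M v k.succ, chainRow_succ]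
      exact congrArg (· ᵥ* M k.succ) ih

lemma chainRow_vadd {n : ℕ} (d : Fin (n + 1) → ℕ) (M) (u v : Fin (d 0) → ℝ) (k : Fin (n+1)) :
    chainRow d M (u + v) k = chainRow d M u k + chainRow d M v k := by
  induction k using Fin.induction with
  | zero => rfl
  | succ k ih => rw [chainRow_succ, chainRow_succ, chainRow_succ, ih, Matrix.add_vecMul]

lemma chainRow_vsmul {n : ℕ} (d : Fin (n + 1) → ℕ) (M) (c : ℝ) (v : Fin (d 0) → ℝ)
    (k : Fin (n+1)) : chainRow d M (c • v) k = c • chainRow d M v k := by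
  induction k using Fin.induction with
  | zero => rfl
  | succ k ih => rw [chainRow_succ, chainRow_succ, ih, Matrix.smul_vecMul]

lemma chainRow_vzero {n : ℕ} (d : Fin (n + 1) → ℕ) (M) (k : Fin (n+1)) :
    chainRow d M (0 : Fin (d 0) → ℝ) k = 0 := by
  induction k using Fin.induction with
  | zero => rfl
  | succ k ih => rw [chainRow_succ, ih, Matrix.zero_vecMul]

lemma chainRow_vsum {n : ℕ} (d : Fin (n + 1) → ℕ) (M) {ι : Type*} (s : Finset ι)
    (v : ι → Fin (d 0) → ℝ) (k : Fin (n+1)) :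
    chainRow d M (∑ i ∈ s, v i) k = ∑ i ∈ s, chainRow d M (v i) k := by
  classical
  induction s using Finset.induction with
  | empty => simp [chainRow_vzero]
  | insert _ _ h ih => simp [Finset.sum_insert h, chainRow_vadd, ih]

lemma chainRow_eq_sum_single {n : ℕ} (d : Fin (n + 1) → ℕ) (M) (v : Fin (d 0) → ℝ)
    (k : Fin (n+1)) :
    chainRow d M v k = ∑ i, v i • chainRow d M (Pi.single i 1) k := by
  conv_lhs => rw [show v = ∑ i, v i • (Pi.single i 1 : Fin (d 0) → ℝ) by
    funext j; simp [Finset.sum_apply, Pi.single_apply]]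
  rw [chainRow_vsum]
  exact Finset.sum_congr rfl fun i _ => chainRow_vsmul d M (v i) _ k

lemma sum_smul_dotProduct {p : ℕ} {ι : Type*} (s : Finset ι) (c : ι → ℝ)
    (f : ι → Fin p → ℝ) (w : Fin p → ℝ) :
    (∑ i ∈ s, c i • f i) ⬝ᵥ w = ∑ i ∈ s, c i * (f i ⬝ᵥ w) := by
  simp only [dotProduct, Finset.sum_apply, Pi.smul_apply, smul_eq_mul,
    Finset.sum_mul, Finset.mul_sum]
  rw [Finset.sum_comm]
  exact Finset.sum_congr rfl fun i _ => Finset.sum_congr rfl fun j _ => by ring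

lemma chain_integral {m : ℕ} : ∀ (d : Fin (m + 1) → ℕ)
    (M : (k : Fin m) → ℝ → Matrix (Fin (d k.castSucc)) (Fin (d k.succ)) ℝ)
    (μ : Fin m → Measure ℝ), (∀ k, SigmaFinite (μ k)) →
    (∀ k i j, Integrable (fun t => M k t i j) (μ k)) →
    ∀ (v : Fin (d 0) → ℝ) (w : Fin (d (Fin.last m)) → ℝ),
    Integrable (fun y : Fin m → ℝ =>
        chainRow d (fun k => M k (y k)) v (Fin.last m) ⬝ᵥ w) (Measure.pi μ) ∧
    ∫ y, chainRow d (fun k => M k (y k)) v (Fin.last m) ⬝ᵥ w ∂Measure.pi μ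
      = chainRow d (fun k => Matrix.of fun i j => ∫ t, M k t i j ∂μ k) v (Fin.last m) ⬝ᵥ w := by
  induction m with
  | zero =>
      intro d M μ hσ hInt v w
      haveI : ∀ i : Fin 0, IsProbabilityMeasure (μ i) := fun i => i.elim0
      have h0 : ∀ (N : (k : Fin 0) → Matrix (Fin (d k.castSucc)) (Fin (d k.succ)) ℝ),
          chainRow d N v (Fin.last 0) = v := fun N => chainRow_zero d N v
      constructor
      · simpa [h0] using (integrable_const (v ⬝ᵥ w) : Integrable _ (Measure.pi μ))
      · simp [h0, chainRow_zero]
  | succ m ih =>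
      intro d M μ hσ hInt v w
      haveI : ∀ k, SigmaFinite (μ k) := hσ
      set d' : Fin (m + 1) → ℕ := fun i => d i.succ with hd'
      set ν : Measure (Fin m → ℝ) := Measure.pi (fun i => μ i.succ) with hν
      haveI : ∀ i : Fin m, SigmaFinite (μ i.succ) := fun i => hσ _
      set e := MeasurableEquiv.piFinSuccAbove (fun _ : Fin (m+1) => ℝ) 0 with he
      have hmp : MeasurePreserving e (Measure.pi μ) ((μ 0).prod ν) := by
        have := measurePreserving_piFinSuccAbove μ 0
        simpa [Fin.zero_succAbove, he] using this
      set g : Fin (d' 0) → (Fin m → ℝ) → ℝ := fun i yt =>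
        chainRow d' (fun k => M k.succ (yt k)) (Pi.single i 1) (Fin.last m) ⬝ᵥ w with hg
      have hIH := fun i : Fin (d' 0) =>
        ih d' (fun k => M k.succ) (fun k => μ k.succ) (fun k => hσ _)
          (fun k i j => hInt k.succ i j) (Pi.single i 1) w
      have key : ∀ z : ℝ × (Fin m → ℝ),
          chainRow d (fun k => M k (e.symm z k)) v ((Fin.last m).succ) ⬝ᵥ w
            = ∑ i, (v ᵥ* M 0 z.1) i * g i z.2 := by
        rintro ⟨x, yt⟩
        have hz : (e.symm (x, yt) : Fin (m+1) → ℝ) = Fin.cons x yt := by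
          simp [he, MeasurableEquiv.piFinSuccAbove_symm_apply, Fin.insertNthEquiv,
            Fin.insertNth_zero']
        rw [chainRow_shift]
        simp only [hz, Fin.cons_zero, Fin.cons_succ]
        rw [chainRow_eq_sum_single, sum_smul_dotProduct]
      have keyY : ∀ y : Fin (m+1) → ℝ,
          chainRow d (fun k => M k (y k)) v ((Fin.last m).succ) ⬝ᵥ w
            = ∑ i, (v ᵥ* M 0 (e y).1) i * g i (e y).2 := by
        intro y
        have := key (e y)
        rwa [e.symm_apply_apply] at this
      have hv1 : ∀ i : Fin (d' 0), Integrable (fun x => (v ᵥ* M 0 x) i) (μ 0) := by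
        intro i
        have : (fun x => (v ᵥ* M 0 x) i) = fun x => ∑ l, v l * M 0 x l i := by
          funext x; simp [Matrix.vecMul, dotProduct]
        rw [this]
        exact integrable_finset_sum _ fun l _ => (hInt 0 l i).const_mul (v l)
      have hprodInt : ∀ i : Fin (d' 0),
          Integrable (fun z : ℝ × (Fin m → ℝ) => (v ᵥ* M 0 z.1) i * g i z.2)
            ((μ 0).prod ν) := fun i => (hv1 i).mul_prod (hIH i).1
      have hsumInt : Integrable
          (fun z : ℝ × (Fin m → ℝ) => ∑ i, (v ᵥ* M 0 z.1) i * g i z.2) ((μ 0).prod ν) :=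
        integrable_finset_sum _ fun i _ => hprodInt i
      have hIntv0 : ∀ i : Fin (d' 0),
          (∫ x, (v ᵥ* M 0 x) i ∂μ 0)
            = (v ᵥ* (Matrix.of fun i j => ∫ t, M 0 t i j ∂μ 0)) i := by
        intro i
        have h1 : (fun x => (v ᵥ* M 0 x) i) = fun x => ∑ l, v l * M 0 x l i := by
          funext x; simp [Matrix.vecMul, dotProduct]
        rw [h1]
        rw [integral_finset_sum Finset.univ
          (f := fun (l : Fin (d 0)) (t : ℝ) => v l * M 0 t l i)
          (fun l _ => (hInt 0 l i).const_mul (v l))]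
        simp only [MeasureTheory.integral_const_mul]
        simp [Matrix.vecMul, dotProduct]; rfl
      constructor
      · show Integrable (fun y : Fin (m+1) → ℝ =>
            chainRow d (fun k => M k (y k)) v ((Fin.last m).succ) ⬝ᵥ w) (Measure.pi μ)
        have hF : (fun y : Fin (m+1) → ℝ =>
            chainRow d (fun k => M k (y k)) v ((Fin.last m).succ) ⬝ᵥ w)
            = (fun z : ℝ × (Fin m → ℝ) => ∑ i, (v ᵥ* M 0 z.1) i * g i z.2) ∘ ⇑e :=
          funext keyY
        rw [hF]
        exact (hmp.integrable_comp_emb e.measurableEmbedding).mpr hsumInt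
      · show (∫ y : Fin (m+1) → ℝ,
            chainRow d (fun k => M k (y k)) v ((Fin.last m).succ) ⬝ᵥ w ∂Measure.pi μ)
            = chainRow d (fun k => Matrix.of fun i j => ∫ t, M k t i j ∂μ k) v
                ((Fin.last m).succ) ⬝ᵥ w
        have h2 : (∫ y : Fin (m+1) → ℝ,
              chainRow d (fun k => M k (y k)) v ((Fin.last m).succ) ⬝ᵥ w ∂Measure.pi μ)
            = ∫ z : ℝ × (Fin m → ℝ), ∑ i, (v ᵥ* M 0 z.1) i * g i z.2 ∂(μ 0).prod ν := by
          rw [show (fun y : Fin (m+1) → ℝ =>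
              chainRow d (fun k => M k (y k)) v ((Fin.last m).succ) ⬝ᵥ w)
              = fun y => ∑ i, (v ᵥ* M 0 (e y).1) i * g i (e y).2 from funext keyY]
          exact hmp.integral_comp e.measurableEmbedding
            (fun z : ℝ × (Fin m → ℝ) => ∑ i, (v ᵥ* M 0 z.1) i * g i z.2)
        rw [h2, integral_finset_sum _ fun i _ => hprodInt i]
        have h3 : ∀ i : Fin (d' 0),
            (∫ z : ℝ × (Fin m → ℝ), (v ᵥ* M 0 z.1) i * g i z.2 ∂(μ 0).prod ν)
              = (v ᵥ* (Matrix.of fun i j => ∫ t, M 0 t i j ∂μ 0)) i *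
                (chainRow d' (fun k => Matrix.of fun i j => ∫ t, M k.succ t i j ∂μ k.succ)
                  (Pi.single i 1) (Fin.last m) ⬝ᵥ w) := by
          intro i
          exact (integral_prod_mul (μ := μ 0) (ν := ν)
            (fun x => (v ᵥ* M 0 x) i) (g i)).trans (by rw [hIntv0 i, (hIH i).2])
        rw [Finset.sum_congr rfl fun i _ => h3 i]
        rw [chainRow_shift]
        rw [chainRow_eq_sum_single (fun i => d i.succ) _ _ (Fin.last m), sum_smul_dotProduct]
        rfl

lemma vecMul_smulMat {p q : ℕ} (c : ℝ) (M : Matrix (Fin p) (Fin q) ℝ) (v : Fin p → ℝ) :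
    v ᵥ* (c • M) = c • (v ᵥ* M) := by
  funext j
  simp [Matrix.vecMul, dotProduct, Finset.mul_sum]
  ring_nf
  exact Finset.sum_congr rfl fun i _ => by ring

lemma chainRow_smul_mats {m : ℕ} : ∀ (d : Fin (m + 1) → ℕ)
    (M : (k : Fin m) → Matrix (Fin (d k.castSucc)) (Fin (d k.succ)) ℝ)
    (c : Fin m → ℝ) (v : Fin (d 0) → ℝ),
    chainRow d (fun k => c k • M k) v (Fin.last m)
      = (∏ k, c k) • chainRow d M v (Fin.last m) := by
  induction m with
  | zero =>
      intro d M c v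
      simp only [Finset.univ_eq_empty, Finset.prod_empty, one_smul]
      rw [show Fin.last 0 = 0 from rfl, chainRow_zero, chainRow_zero]
  | succ m ih =>
      intro d M c v
      rw [show Fin.last (m+1) = (Fin.last m).succ from rfl, chainRow_shift, chainRow_shift]
      rw [show (fun i : Fin m => (fun k => c k • M k) i.succ)
            = (fun i : Fin m => c i.succ • M i.succ) from rfl]
      rw [ih (fun i => d i.succ) (fun i => M i.succ) (fun i => c i.succ)]
      rw [show v ᵥ* ((fun k => c k • M k) 0) = c 0 • (v ᵥ* M 0) from vecMul_smulMat _ _ _]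
      rw [chainRow_vsmul, Fin.prod_univ_succ, smul_smul]
      ring_nf


lemma my_restrict_pi_pi {n : ℕ} (μ : Fin n → Measure ℝ) [∀ i, SigmaFinite (μ i)]
    (s : Fin n → Set ℝ) (hs : ∀ i, MeasurableSet (s i)) :
    (Measure.pi μ).restrict (Set.univ.pi s) = Measure.pi (fun i => (μ i).restrict (s i)) := by
  haveI : ∀ i, SigmaFinite ((μ i).restrict (s i)) := fun i => inferInstance
  refine (Measure.pi_eq fun t ht => ?_).symm
  rw [Measure.restrict_apply (MeasurableSet.univ_pi ht), ← Set.pi_inter_distrib,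
    Measure.pi_pi]
  exact Finset.prod_congr rfl fun i _ => (Measure.restrict_apply (ht i)).symm


section Analysis
variable {p : ℕ}

noncomputable def entryL (i j : Fin p) : Matrix (Fin p) (Fin p) ℝ →ₗ[ℝ] ℝ where
  toFun N := N i j
  map_add' _ _ := rfl
  map_smul' _ _ := rfl

lemma expEntry_hasDerivAt (B : Matrix (Fin p) (Fin p) ℝ) (i j : Fin p) (t : ℝ) :
    HasDerivAt (fun u : ℝ => NormedSpace.exp (u • B) i j)
      ((B * NormedSpace.exp (t • B)) i j) t := by
  letI : SeminormedRing (Matrix (Fin p) (Fin p) ℝ) := Matrix.linftyOpSemiNormedRing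
  letI : NormedRing (Matrix (Fin p) (Fin p) ℝ) := Matrix.linftyOpNormedRing
  letI : NormedAlgebra ℝ (Matrix (Fin p) (Fin p) ℝ) := Matrix.linftyOpNormedAlgebra
  haveI : CompleteSpace (Matrix (Fin p) (Fin p) ℝ) := FiniteDimensional.complete ℝ _
  have h := hasDerivAt_exp_smul_const' (𝕂 := ℝ) B t
  have hL := (LinearMap.toContinuousLinearMap (entryL i j)).hasFDerivAt
    (x := NormedSpace.exp (t • B))
  exact (hL.comp_hasDerivAt t h : _)

lemma expEntry_hasDerivAt' (B : Matrix (Fin p) (Fin p) ℝ) (i j : Fin p) (t : ℝ) :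
    HasDerivAt (fun u : ℝ => NormedSpace.exp (u • B) i j)
      ((NormedSpace.exp (t • B) * B) i j) t := by
  letI : SeminormedRing (Matrix (Fin p) (Fin p) ℝ) := Matrix.linftyOpSemiNormedRing
  letI : NormedRing (Matrix (Fin p) (Fin p) ℝ) := Matrix.linftyOpNormedRing
  letI : NormedAlgebra ℝ (Matrix (Fin p) (Fin p) ℝ) := Matrix.linftyOpNormedAlgebra
  haveI : CompleteSpace (Matrix (Fin p) (Fin p) ℝ) := FiniteDimensional.complete ℝ _
  have h := hasDerivAt_exp_smul_const (𝕂 := ℝ) B t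
  have hL := (LinearMap.toContinuousLinearMap (entryL i j)).hasFDerivAt
    (x := NormedSpace.exp (t • B))
  exact (hL.comp_hasDerivAt t h : _)

lemma expEntry_continuous (B : Matrix (Fin p) (Fin p) ℝ) (i j : Fin p) :
    Continuous (fun t : ℝ => NormedSpace.exp (t • B) i j) :=
  continuous_iff_continuousAt.2 fun t => (expEntry_hasDerivAt B i j t).continuousAt

lemma bounded_of_tendsto (f : ℝ → ℝ) (hc : Continuous f)
    (h0 : Tendsto f atTop (nhds 0)) : ∃ C, ∀ t, 0 ≤ t → |f t| ≤ C := by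
  have h1 : ∀ᶠ t in atTop, |f t| < 1 := by
    have h := h0.abs
    simp only [abs_zero] at h
    exact h.eventually_lt_const one_pos
  obtain ⟨T, hT⟩ := eventually_atTop.mp h1
  obtain ⟨C, hC⟩ := (isCompact_Icc (a := (0:ℝ)) (b := T)).exists_bound_of_continuousOn
    hc.continuousOn
  refine ⟨max C 1, fun t ht => ?_⟩
  rcases le_total t T with h | h
  · exact le_trans (by simpa [Real.norm_eq_abs] using hC t ⟨ht, h⟩) (le_max_left _ _)
  · exact le_trans (hT t h).le (le_max_right _ _)

lemma expA_integrable (A : Matrix (Fin p) (Fin p) ℝ) (hAinv : IsUnit A.det)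
    (hdecay : ∀ i j, Tendsto (fun t : ℝ => (NormedSpace.exp (t • A)) i j) atTop (nhds 0))
    (hnn : ∀ t : ℝ, 0 ≤ t → ∀ i j, 0 ≤ (NormedSpace.exp (t • A)) i j) (i j : Fin p) :
    IntegrableOn (fun t : ℝ => NormedSpace.exp (t • A) i j) (Set.Ioi (0:ℝ)) volume := by
  set f := fun t : ℝ => NormedSpace.exp (t • A) i j with hf
  have hc : Continuous f := expEntry_continuous A i j
  have hbd : ∀ l : Fin p, ∃ C, ∀ t : ℝ, 0 ≤ t → |NormedSpace.exp (t • A) l j| ≤ C := fun l =>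
    bounded_of_tendsto _ (expEntry_continuous A l j) (hdecay l j)
  choose C hC using hbd
  set F := fun u : ℝ => (A⁻¹ * NormedSpace.exp (u • A)) i j with hFdef
  have hF : ∀ u : ℝ, HasDerivAt F (f u) u := by
    intro u
    have h1 : HasDerivAt (fun u : ℝ => ∑ l, A⁻¹ i l * NormedSpace.exp (u • A) l j)
        (∑ l, A⁻¹ i l * (A * NormedSpace.exp (u • A)) l j) u :=
      HasDerivAt.fun_sum fun l _ => (expEntry_hasDerivAt A l j u).const_mul (A⁻¹ i l)
    have e1 : ∑ l, A⁻¹ i l * (A * NormedSpace.exp (u • A)) l j = f u := by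
      have h2 : A⁻¹ * (A * NormedSpace.exp (u • A)) = NormedSpace.exp (u • A) := by
        rw [← Matrix.mul_assoc, Matrix.nonsing_inv_mul A hAinv, Matrix.one_mul]
      calc ∑ l, A⁻¹ i l * (A * NormedSpace.exp (u • A)) l j
          = (A⁻¹ * (A * NormedSpace.exp (u • A))) i j := by simp [Matrix.mul_apply]
        _ = f u := by rw [h2]
    have e2 : F = fun u => ∑ l, A⁻¹ i l * NormedSpace.exp (u • A) l j := by
      funext u; simp [hFdef, Matrix.mul_apply]
    rw [e2]
    exact e1 ▸ h1
  set I := (∑ l, |A⁻¹ i l| * C l) + |F 0| with hI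
  apply integrableOn_Ioi_of_intervalIntegral_norm_bounded I 0
    (fun T : ℝ => (hc.intervalIntegrable 0 T).1) (tendsto_id (α := ℝ))
  filter_upwards [eventually_ge_atTop (0:ℝ)] with T hT
  have hval : (∫ t in (0:ℝ)..T, ‖f t‖) = F T - F 0 := by
    have hcongr : ∀ t ∈ Set.uIcc (0:ℝ) T, ‖f t‖ = f t := by
      intro t ht
      rw [Set.uIcc_of_le hT] at ht
      exact (Real.norm_eq_abs _).trans (abs_of_nonneg (hnn t ht.1 i j))
    rw [intervalIntegral.integral_congr hcongr]
    exact intervalIntegral.integral_eq_sub_of_hasDerivAt (fun u _ => hF u)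
      (hc.intervalIntegrable 0 T)
  rw [hval]
  have hFT : F T ≤ ∑ l, |A⁻¹ i l| * C l := by
    have : F T = ∑ l, A⁻¹ i l * NormedSpace.exp (T • A) l j := by
      simp [hFdef, Matrix.mul_apply]
    rw [this]
    refine Finset.sum_le_sum fun l _ => ?_
    calc A⁻¹ i l * NormedSpace.exp (T • A) l j
        ≤ |A⁻¹ i l * NormedSpace.exp (T • A) l j| := le_abs_self _
      _ = |A⁻¹ i l| * |NormedSpace.exp (T • A) l j| := abs_mul _ _
      _ ≤ |A⁻¹ i l| * C l := by
          exact mul_le_mul_of_nonneg_left (hC l T hT) (abs_nonneg _)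
  have := neg_abs_le (F 0)
  simp only [hI]
  linarith
end Analysis

section Laplace
variable {p : ℕ}

lemma exp_shift (A : Matrix (Fin p) (Fin p) ℝ) (θ t : ℝ) :
    NormedSpace.exp (t • (A - θ • (1 : Matrix (Fin p) (Fin p) ℝ)))
      = Real.exp (-(θ * t)) • NormedSpace.exp (t • A) := by
  have h1 : t • (A - θ • (1 : Matrix (Fin p) (Fin p) ℝ))
      = t • A + (-(θ * t)) • (1 : Matrix (Fin p) (Fin p) ℝ) := by
    rw [smul_sub, smul_smul, sub_eq_add_neg, ← neg_smul, mul_comm t θ]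
  rw [h1, Matrix.exp_add_of_commute (t • A) ((-(θ * t)) • (1 : Matrix (Fin p) (Fin p) ℝ))
    ((Commute.one_right (t • A)).smul_right _)]
  have h2 : NormedSpace.exp ((-(θ * t)) • (1 : Matrix (Fin p) (Fin p) ℝ))
      = Real.exp (-(θ * t)) • (1 : Matrix (Fin p) (Fin p) ℝ) := by
    rw [Matrix.smul_one_eq_diagonal, Matrix.exp_diagonal]
    have hped : (NormedSpace.exp fun _ : Fin p => -(θ * t))
        = fun _ : Fin p => Real.exp (-(θ * t)) := by
      rw [Pi.exp_def]
      funext i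
      rw [Real.exp_eq_exp_ℝ]
    rw [hped, ← Matrix.smul_one_eq_diagonal]
  rw [h2, Matrix.mul_smul, Matrix.mul_one]

lemma laplace_matrix (A : Matrix (Fin p) (Fin p) ℝ) (hAinv : IsUnit A.det)
    (hdecay : ∀ i j, Tendsto (fun t : ℝ => (NormedSpace.exp (t • A)) i j) atTop (nhds 0))
    (hnn : ∀ t : ℝ, 0 ≤ t → ∀ i j, 0 ≤ (NormedSpace.exp (t • A)) i j)
    (θ : ℝ) (hθ : 0 ≤ θ) :
    (∀ i j, IntegrableOn
        (fun t : ℝ => NormedSpace.exp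
          (t • (A - θ • (1 : Matrix (Fin p) (Fin p) ℝ)))  i j) (Set.Ioi (0:ℝ)) volume) ∧
    Matrix.of (fun i j => ∫ t in Set.Ioi (0:ℝ),
        NormedSpace.exp (t • (A - θ • (1 : Matrix (Fin p) (Fin p) ℝ))) i j)
      = (θ • (1 : Matrix (Fin p) (Fin p) ℝ) - A)⁻¹ := by
  set B := A - θ • (1 : Matrix (Fin p) (Fin p) ℝ) with hB
  have hent : ∀ (t : ℝ) (i j : Fin p), NormedSpace.exp (t • B) i j
      = Real.exp (-(θ * t)) * NormedSpace.exp (t • A) i j := by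
    intro t i j; rw [hB, exp_shift]; simp [Matrix.smul_apply]
  have hBnn : ∀ t : ℝ, 0 ≤ t → ∀ i j, 0 ≤ NormedSpace.exp (t • B) i j := fun t ht i j => by
    rw [hent]; exact mul_nonneg (Real.exp_pos _).le (hnn t ht i j)
  have hBdecay : ∀ i j, Tendsto (fun t : ℝ => NormedSpace.exp (t • B) i j) atTop (nhds 0) := by
    intro i j
    apply squeeze_zero' (g := fun t : ℝ => NormedSpace.exp (t • A) i j)
    · filter_upwards [eventually_ge_atTop (0:ℝ)] with t ht; exact hBnn t ht i j
    · filter_upwards [eventually_ge_atTop (0:ℝ)] with t ht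
      rw [hent]
      have h1 : Real.exp (-(θ * t)) ≤ 1 := by
        rw [Real.exp_le_one_iff]; simp [mul_nonneg hθ ht]
      exact mul_le_of_le_one_left (hnn t ht i j) h1
    · exact hdecay i j
  have hBint : ∀ i j, IntegrableOn
      (fun t : ℝ => NormedSpace.exp (t • B) i j) (Set.Ioi (0:ℝ)) volume := by
    intro i j
    refine Integrable.mono (expA_integrable A hAinv hdecay hnn i j)
      ((expEntry_continuous B i j).aestronglyMeasurable.restrict) ?_
    rw [ae_restrict_iff' measurableSet_Ioi]
    refine ae_of_all _ fun t ht => ?_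
    rw [Real.norm_eq_abs, Real.norm_eq_abs, hent, abs_mul]
    have h1 : |Real.exp (-(θ * t))| ≤ 1 := by
      rw [abs_of_pos (Real.exp_pos _), Real.exp_le_one_iff]
      simp [mul_nonneg hθ (le_of_lt ht)]
    exact mul_le_of_le_one_left (abs_nonneg _) h1
  set G := Matrix.of (fun i j => ∫ t in Set.Ioi (0:ℝ), NormedSpace.exp (t • B) i j) with hG
  have hlim : ∀ i j, Tendsto (fun T : ℝ => ∫ t in (0:ℝ)..T, NormedSpace.exp (t • B) i j)
      atTop (nhds (G i j)) :=
    fun i j => intervalIntegral_tendsto_integral_Ioi 0 (hBint i j) tendsto_id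
  have hexp0 : NormedSpace.exp ((0:ℝ) • B) = (1 : Matrix (Fin p) (Fin p) ℝ) := by
    rw [zero_smul, NormedSpace.exp_zero]
  have hBG : B * G = -1 := by
    ext i j
    have hcont : ∀ (l : Fin p), Continuous (fun t : ℝ => NormedSpace.exp (t • B) l j) :=
      fun l => expEntry_continuous B l j
    have h1 : Tendsto (fun T : ℝ => ∫ t in (0:ℝ)..T, (B * NormedSpace.exp (t • B)) i j)
        atTop (nhds ((B * G) i j)) := by
      have heq : ∀ T : ℝ, (∫ t in (0:ℝ)..T, (B * NormedSpace.exp (t • B)) i j)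
          = ∑ l, B i l * ∫ t in (0:ℝ)..T, NormedSpace.exp (t • B) l j := by
        intro T
        rw [show (fun t : ℝ => (B * NormedSpace.exp (t • B)) i j)
            = fun t : ℝ => ∑ l, B i l * NormedSpace.exp (t • B) l j from
          funext fun t => by simp [Matrix.mul_apply]]
        rw [intervalIntegral.integral_finset_sum
          (f := fun l t => B i l * NormedSpace.exp (t • B) l j) (fun l _ =>
          ((continuous_const.mul (hcont l)).intervalIntegrable 0 T))]
        exact Finset.sum_congr rfl fun l _ => intervalIntegral.integral_const_mul _ _
      have h2 : Tendsto (fun T : ℝ => ∑ l, B i l * ∫ t in (0:ℝ)..T, NormedSpace.exp (t • B) l j)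
          atTop (nhds (∑ l, B i l * G l j)) :=
        tendsto_finset_sum _ fun l _ => (hlim l j).const_mul (B i l)
      have h3 : (B * G) i j = ∑ l, B i l * G l j := by simp [Matrix.mul_apply]
      rw [h3]
      exact h2.congr fun T => (heq T).symm
    have h4 : Tendsto (fun T : ℝ => ∫ t in (0:ℝ)..T, (B * NormedSpace.exp (t • B)) i j)
        atTop (nhds (0 - (1 : Matrix (Fin p) (Fin p) ℝ) i j)) := by
      have hFTC : ∀ T : ℝ, (∫ t in (0:ℝ)..T, (B * NormedSpace.exp (t • B)) i j)
          = NormedSpace.exp (T • B) i j - (1 : Matrix (Fin p) (Fin p) ℝ) i j := by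
        intro T
        have hii := intervalIntegral.integral_eq_sub_of_hasDerivAt
          (f := fun u : ℝ => NormedSpace.exp (u • B) i j)
          (f' := fun u : ℝ => (B * NormedSpace.exp (u • B)) i j)
          (fun u _ => expEntry_hasDerivAt B i j u)
          (by
            have : Continuous (fun u : ℝ => (B * NormedSpace.exp (u • B)) i j) := by
              have : (fun u : ℝ => (B * NormedSpace.exp (u • B)) i j)
                  = fun u : ℝ => ∑ l, B i l * NormedSpace.exp (u • B) l j :=
                funext fun u => by simp [Matrix.mul_apply]
              rw [this]
              exact continuous_finset_sum _ fun l _ => continuous_const.mul (hcont l)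
            exact this.intervalIntegrable 0 T)
        rw [hii]
        simp [hexp0]
      exact ((hBdecay i j).sub tendsto_const_nhds).congr fun T => (hFTC T).symm
    have := tendsto_nhds_unique h1 h4
    simpa using this
  have hGB : G * B = -1 := by
    ext i j
    have hcont : ∀ (l : Fin p), Continuous (fun t : ℝ => NormedSpace.exp (t • B) i l) :=
      fun l => expEntry_continuous B i l
    have h1 : Tendsto (fun T : ℝ => ∫ t in (0:ℝ)..T, (NormedSpace.exp (t • B) * B) i j)
        atTop (nhds ((G * B) i j)) := by
      have heq : ∀ T : ℝ, (∫ t in (0:ℝ)..T, (NormedSpace.exp (t • B) * B) i j)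
          = ∑ l, (∫ t in (0:ℝ)..T, NormedSpace.exp (t • B) i l) * B l j := by
        intro T
        rw [show (fun t : ℝ => (NormedSpace.exp (t • B) * B) i j)
            = fun t : ℝ => ∑ l, NormedSpace.exp (t • B) i l * B l j from
          funext fun t => by simp [Matrix.mul_apply]]
        rw [intervalIntegral.integral_finset_sum
          (f := fun l t => NormedSpace.exp (t • B) i l * B l j) (fun l _ =>
          (((hcont l).mul continuous_const).intervalIntegrable 0 T))]
        exact Finset.sum_congr rfl fun l _ => intervalIntegral.integral_mul_const _ _
      have h2 : Tendsto
          (fun T : ℝ => ∑ l, (∫ t in (0:ℝ)..T, NormedSpace.exp (t • B) i l) * B l j)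
          atTop (nhds (∑ l, G i l * B l j)) :=
        tendsto_finset_sum _ fun l _ => (hlim i l).mul_const (B l j)
      have h3 : (G * B) i j = ∑ l, G i l * B l j := by simp [Matrix.mul_apply]
      rw [h3]
      exact h2.congr fun T => (heq T).symm
    have h4 : Tendsto (fun T : ℝ => ∫ t in (0:ℝ)..T, (NormedSpace.exp (t • B) * B) i j)
        atTop (nhds (0 - (1 : Matrix (Fin p) (Fin p) ℝ) i j)) := by
      have hFTC : ∀ T : ℝ, (∫ t in (0:ℝ)..T, (NormedSpace.exp (t • B) * B) i j)
          = NormedSpace.exp (T • B) i j - (1 : Matrix (Fin p) (Fin p) ℝ) i j := by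
        intro T
        have hii := intervalIntegral.integral_eq_sub_of_hasDerivAt
          (f := fun u : ℝ => NormedSpace.exp (u • B) i j)
          (f' := fun u : ℝ => (NormedSpace.exp (u • B) * B) i j)
          (fun u _ => expEntry_hasDerivAt' B i j u)
          (by
            have : Continuous (fun u : ℝ => (NormedSpace.exp (u • B) * B) i j) := by
              have : (fun u : ℝ => (NormedSpace.exp (u • B) * B) i j)
                  = fun u : ℝ => ∑ l, NormedSpace.exp (u • B) i l * B l j :=
                funext fun u => by simp [Matrix.mul_apply]
              rw [this]
              exact continuous_finset_sum _ fun l _ => (hcont l).mul continuous_const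
            exact this.intervalIntegrable 0 T)
        rw [hii]
        simp [hexp0]
      exact ((hBdecay i j).sub tendsto_const_nhds).congr fun T => (hFTC T).symm
    have := tendsto_nhds_unique h1 h4
    simpa using this
  refine ⟨fun i j => hBint i j, ?_⟩
  have hneg : θ • (1 : Matrix (Fin p) (Fin p) ℝ) - A = -B := by rw [hB, neg_sub]
  rw [hneg]
  have hone : G * (-B) = 1 := by rw [Matrix.mul_neg, hGB, neg_neg]
  exact (Matrix.inv_eq_left_inv hone).symm

end Laplace


/-- Joint Laplace transform of the sequential multivariate phase-type density:
`∫ e^{−θ·y} f(y) dy = α (θ₁I−A₁)^{−1} D₁ (θ₂I−A₂)^{−1} D₂ ⋯ (θₙI−Aₙ)^{−1} Dₙ 𝟏`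
for all `θₖ ≥ 0`. -/
theorem stmt_3 (n : ℕ) (d : Fin (n + 2) → ℕ)
    (A : (k : Fin (n + 1)) → Matrix (Fin (d k.castSucc)) (Fin (d k.castSucc)) ℝ)
    (D : (k : Fin (n + 1)) → Matrix (Fin (d k.castSucc)) (Fin (d k.succ)) ℝ)
    (α : Fin (d 0) → ℝ)
    (hα : ∀ i, 0 ≤ α i) (hα1 : α ⬝ᵥ (fun _ => (1 : ℝ)) = 1)
    (hAinv : ∀ k, IsUnit (A k).det)
    (hAdecay : ∀ k, ∀ i j, Tendsto (fun t : ℝ => (NormedSpace.exp (t • A k)) i j) atTop (nhds 0))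
    (hAnn : ∀ k, ∀ t : ℝ, 0 ≤ t → ∀ i j, 0 ≤ (NormedSpace.exp (t • A k)) i j)
    (hDnn : ∀ k, ∀ i j, 0 ≤ D k i j)
    (hDlast : D (Fin.last n) *ᵥ (fun _ => (1 : ℝ)) = -(A (Fin.last n) *ᵥ (fun _ => (1 : ℝ))))
    (θ : Fin (n + 1) → ℝ) (hθ : ∀ k, 0 ≤ θ k) :
    (∫ y in Set.univ.pi (fun _ : Fin (n + 1) => Set.Ioi (0 : ℝ)),
        Real.exp (-(∑ i, θ i * y i)) *
          ((chainRow d (fun k => NormedSpace.exp (y k • A k) * D k) α (Fin.last (n + 1))) ⬝ᵥ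
            (fun _ => (1 : ℝ))))
      = (chainRow d (fun k => (θ k • (1 : Matrix (Fin (d k.castSucc)) (Fin (d k.castSucc)) ℝ) - A k)⁻¹ * D k)
          α (Fin.last (n + 1))) ⬝ᵥ (fun _ => (1 : ℝ)) := by
  classical
  have hlap := fun k : Fin (n+1) =>
    laplace_matrix (A k) (hAinv k) (hAdecay k) (hAnn k) (θ k) (hθ k)
  set B : (k : Fin (n + 1)) → Matrix (Fin (d k.castSucc)) (Fin (d k.castSucc)) ℝ :=
    fun k => A k - θ k • 1 with hBdef
  set M : (k : Fin (n + 1)) → ℝ → Matrix (Fin (d k.castSucc)) (Fin (d k.succ)) ℝ :=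
    fun k t => NormedSpace.exp (t • B k) * D k with hMdef
  -- pointwise identity of the integrand
  have hpt : ∀ y : Fin (n + 1) → ℝ,
      Real.exp (-(∑ i, θ i * y i)) *
          ((chainRow d (fun k => NormedSpace.exp (y k • A k) * D k) α (Fin.last (n + 1))) ⬝ᵥ
            (fun _ => (1 : ℝ)))
        = chainRow d (fun k => M k (y k)) α (Fin.last (n + 1)) ⬝ᵥ (fun _ => (1 : ℝ)) := by
    intro y
    have h1 : (fun k => M k (y k))
        = fun k => Real.exp (-(θ k * y k)) • (NormedSpace.exp (y k • A k) * D k) := by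
      funext k
      simp only [hMdef, hBdef]
      rw [exp_shift, Matrix.smul_mul]
    rw [h1, chainRow_smul_mats, smul_dotProduct, smul_eq_mul]
    congr 1
    rw [← Real.exp_sum]
    congr 1
    rw [← Finset.sum_neg_distrib]
  rw [show (fun y : Fin (n+1) → ℝ =>
      Real.exp (-(∑ i, θ i * y i)) *
          ((chainRow d (fun k => NormedSpace.exp (y k • A k) * D k) α (Fin.last (n + 1))) ⬝ᵥ
            (fun _ => (1 : ℝ))))
      = fun y => chainRow d (fun k => M k (y k)) α (Fin.last (n + 1)) ⬝ᵥ (fun _ => (1 : ℝ))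
    from funext hpt]
  -- measure rewriting
  have hμ : (volume : Measure (Fin (n+1) → ℝ)).restrict
        (Set.univ.pi fun _ : Fin (n+1) => Set.Ioi (0:ℝ))
      = Measure.pi (fun _ : Fin (n+1) => volume.restrict (Set.Ioi (0:ℝ))) := by
    rw [MeasureTheory.volume_pi,
      my_restrict_pi_pi _ _ (fun _ => measurableSet_Ioi)]
  rw [hμ]
  -- integrability of the matrix entries
  have hMint : ∀ (k : Fin (n+1)) i j,
      Integrable (fun t => M k t i j) (volume.restrict (Set.Ioi (0:ℝ))) := by
    intro k i j
    have hrw : (fun t : ℝ => M k t i j)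
        = fun t => ∑ l, NormedSpace.exp (t • B k) i l * D k l j :=
      funext fun t => by simp [hMdef, Matrix.mul_apply]
    rw [hrw]
    exact integrable_finset_sum _ fun l _ => ((hlap k).1 i l).mul_const (D k l j)
  have hchain := (chain_integral d M (fun _ => volume.restrict (Set.Ioi (0:ℝ)))
    (fun _ => inferInstance) hMint α (fun _ => (1:ℝ))).2
  rw [hchain]
  -- identify the integrated matrices
  have hNM : (fun k : Fin (n+1) =>
        Matrix.of fun i j => ∫ t, M k t i j ∂(volume.restrict (Set.Ioi (0:ℝ))))
      = fun k => (θ k • (1 : Matrix (Fin (d k.castSucc)) (Fin (d k.castSucc)) ℝ) - A k)⁻¹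
          * D k := by
    funext k
    ext i j
    have hrw : (fun t : ℝ => M k t i j)
        = fun t => ∑ l, NormedSpace.exp (t • B k) i l * D k l j :=
      funext fun t => by simp [hMdef, Matrix.mul_apply]
    show (∫ t, M k t i j ∂(volume.restrict (Set.Ioi (0:ℝ)))) = _
    rw [hrw, integral_finset_sum _ fun l _ => ((hlap k).1 i l).mul_const (D k l j)]
    have h2 := (hlap k).2
    have h3 : ∀ l, (∫ t in Set.Ioi (0:ℝ), NormedSpace.exp (t • B k) i l)
        = ((θ k • (1 : Matrix (Fin (d k.castSucc)) (Fin (d k.castSucc)) ℝ) - A k)⁻¹) i l := by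
      intro l
      have := congrFun (congrFun h2 i) l
      exact this
    simp only [MeasureTheory.integral_mul_const]
    rw [Matrix.mul_apply]
    exact Finset.sum_congr rfl fun l _ => by rw [h3 l]
  rw [hNM]
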